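/- For every n ≥ 3, the factor monoid M(w) of any (n−1)-limited rigid word w satisfies the identities (0): xy t₁ x t₂ y ≈ yx t₁ x t₂ y, x t₁ xy t₂ y ≈ x t₁ yx t₂ y, x t₁ y t₂ xy ≈ x t₁ y t₂ yx, and the identity (Aₙ): xⁿ t₁t₂⋯tₙ ≈ (t₁x)(t₂x)⋯(tₙx). -/

import Mathlib

abbrev Word := List ℕ

def subst (φ : ℕ → Word) (w : Word) : Word := w.flatMap φ

inductive Deduce (S : Set (Word × Word)) : Word → Word → Prop
  | refl (w : Word) : Deduce S w w
  | symm {u v : Word} : Deduce S u v → Deduce S v u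
  | trans {u v w : Word} : Deduce S u v → Deduce S v w → Deduce S u w
  | step (a b : Word) (φ : ℕ → Word) {s t : Word} (h : (s, t) ∈ S) :
      Deduce S (a ++ subst φ s ++ b) (a ++ subst φ t ++ b)

def FM (w : Word) : Type := Option {u : Word // u <:+: w}

def fmul {w : Word} : FM w → FM w → FM w
  | some u, some v =>
      if h : (u.1 ++ v.1) <:+: w then some ⟨u.1 ++ v.1, h⟩ else none
  | _, _ => none

def fone (w : Word) : FM w := some ⟨[], List.nil_infix⟩

theorem fmul_none_left {w : Word} (a : FM w) : fmul none a = none := rfl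

theorem fmul_none_right {w : Word} (a : FM w) : fmul a none = none := by
  rcases a with _ | u <;> rfl

theorem fmul_some {w : Word} (u v : {u : Word // u <:+: w}) :
    fmul (some u) (some v) =
      if h : (u.1 ++ v.1) <:+: w then some ⟨u.1 ++ v.1, h⟩ else none := rfl

theorem fmul_assoc {w : Word} (a b c : FM w) : fmul (fmul a b) c = fmul a (fmul b c) := by
  rcases a with _ | u
  · rfl
  rcases b with _ | v
  · rfl
  rcases c with _ | t
  · rw [fmul_none_right] <;> rfl
  rw [fmul_some, fmul_some]
  by_cases h : (u.1 ++ v.1 ++ t.1) <:+: w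
  · have h1 : (u.1 ++ v.1) <:+: w := List.IsInfix.trans ⟨[], t.1, by simp⟩ h
    have h2 : (v.1 ++ t.1) <:+: w := List.IsInfix.trans ⟨u.1, [], by simp⟩ h
    rw [dif_pos h1, fmul_some, dif_pos h2, fmul_some, dif_pos h,
      dif_pos (show (u.1 ++ (v.1 ++ t.1)) <:+: w by simpa [List.append_assoc] using h)]
    simp [List.append_assoc]
    rfl
  · by_cases h1 : (u.1 ++ v.1) <:+: w
    · rw [dif_pos h1, fmul_some, dif_neg h]
      by_cases h2 : (v.1 ++ t.1) <:+: w
      · rw [dif_pos h2, fmul_some,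
          dif_neg (fun hh => h (by simpa [List.append_assoc] using hh))]
      · rw [dif_neg h2] <;> rfl
    · rw [dif_neg h1]
      by_cases h2 : (v.1 ++ t.1) <:+: w
      · rw [dif_pos h2, fmul_some,
          dif_neg (fun hh => h1 (List.IsInfix.trans ⟨[], t.1, by simp⟩ hh))] <;> rfl
      · rw [dif_neg h2] <;> rfl

instance (w : Word) : Monoid (FM w) where
  mul := fmul
  one := fone w
  mul_assoc := fmul_assoc
  one_mul := by
    rintro (_ | u)
    · rfl
    · show fmul (fone w) (some u) = some u
      rw [fone, fmul_some, dif_pos (by simpa using u.2)]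
      simp
      rfl
  mul_one := by
    rintro (_ | u)
    · rfl
    · show fmul (some u) (fone w) = some u
      rw [fone, fmul_some, dif_pos (by simpa using u.2)]
      simp
      rfl

def SatId (M : Type) [Monoid M] (p : Word × Word) : Prop :=
  ∀ φ : ℕ → M, (p.1.map φ).prod = (p.2.map φ).prod

def VSat (E : Set (Word × Word)) (p : Word × Word) : Prop :=
  ∀ (M : Type) [Monoid M], (∀ q ∈ E, SatId M q) → SatId M p

def ids0 : Set (Word × Word) :=
  {([0,1,2,0,3,1],[1,0,2,0,3,1]), ([0,2,0,1,3,1],[0,2,1,0,3,1]), ([0,2,1,3,0,1],[0,2,1,3,1,0])}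

def idA (n : ℕ) : Word × Word :=
  (List.replicate n 0 ++ (List.range n).map (· + 1),
   ((List.range n).map (fun i => [i + 1, 0])).flatten)

def rigid (e₀ : ℕ) (es : List ℕ) : Word :=
  List.replicate e₀ 0 ++ ((es.zipIdx.map Prod.swap).map (fun p => (p.1 + 1) :: List.replicate p.2 0)).flatten

def Bword (n i : ℕ) : Word := List.replicate i 0 ++ 1 :: List.replicate (n - 1 - i) 0

def wmr (m r : ℕ) : Word := rigid (m - 1) (List.replicate r (m - 1))


section Stmt3Aux

/-- Embed a word into the factor monoid. -/
def toFM (w u : Word) : FM w := if h : u <:+: w then some ⟨u, h⟩ else none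

theorem toFM_pos {w u : Word} (h : u <:+: w) : toFM w u = (some ⟨u, h⟩ : FM w) := by
  unfold toFM; exact dif_pos h

theorem toFM_neg {w u : Word} (h : ¬ u <:+: w) : toFM w u = none := by
  unfold toFM; exact dif_neg h

theorem toFM_append (w u v : Word) : toFM w (u ++ v) = fmul (toFM w u) (toFM w v) := by
  by_cases hu : u <:+: w
  · by_cases hv : v <:+: w
    · rw [toFM_pos hu, toFM_pos hv, fmul_some]
      rfl
    · rw [toFM_neg hv, fmul_none_right,
        toFM_neg (fun h => hv (((List.suffix_append u v).isInfix).trans h))]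
  · rw [toFM_neg hu, fmul_none_left,
      toFM_neg (fun h => hu (((List.prefix_append u v).isInfix).trans h))]

theorem fm_mul_def {w : Word} (a b : FM w) : a * b = fmul a b := rfl

theorem prod_map_toFM (w : Word) (ψ : ℕ → Word) (s : Word) :
    (s.map (fun i => toFM w (ψ i))).prod = toFM w (subst ψ s) := by
  induction s with
  | nil =>
      show (1 : FM w) = toFM w (subst ψ [])
      have : subst ψ [] = ([] : Word) := rfl
      rw [this, toFM_pos List.nil_infix]
      rfl
  | cons a s ih =>
      rw [List.map_cons, List.prod_cons, ih, fm_mul_def, ← toFM_append]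
      have h : subst ψ (a :: s) = ψ a ++ subst ψ s := by simp [subst]
      rw [h]

theorem satId_of {w : Word} (p : Word × Word)
    (h1 : ∀ ψ : ℕ → Word, subst ψ p.1 <:+: w → subst ψ p.1 = subst ψ p.2)
    (h2 : ∀ ψ : ℕ → Word, subst ψ p.2 <:+: w → subst ψ p.1 = subst ψ p.2) :
    SatId (FM w) p := by
  intro φ
  set ψ : ℕ → Word := fun i => (φ i).elim (List.replicate (w.length + 1) 0) Subtype.val
    with hψ
  have hφ : ∀ i, φ i = toFM w (ψ i) := by
    intro i
    cases hi : φ i with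
    | none =>
        have hnot : ¬ (List.replicate (w.length + 1) (0 : ℕ) <:+: w) := by
          intro h
          have := h.length_le
          simp at this
        simp [hψ, hi, toFM, hnot]
        rfl
    | some u =>
        simp [hψ, hi, toFM, u.2]
        rfl
  have hmap : ∀ s : Word, s.map φ = s.map (fun i => toFM w (ψ i)) := by
    intro s
    exact List.map_congr_left (fun i _ => hφ i)
  show (p.1.map φ).prod = (p.2.map φ).prod
  rw [hmap, hmap, prod_map_toFM, prod_map_toFM]
  by_cases hA : subst ψ p.1 <:+: w
  · rw [h1 ψ hA]
  · by_cases hB : subst ψ p.2 <:+: w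
    · rw [h2 ψ hB]
    · simp [toFM, hA, hB]
      rfl

theorem count_zero_blocks (l : List (ℕ × ℕ)) :
    ((l.map (fun p => (p.1 + 1) :: List.replicate p.2 0)).flatten).count 0
      = (l.map Prod.snd).sum := by
  induction l with
  | nil => rfl
  | cons p l ih =>
      simp [List.count_cons, List.count_append, List.count_replicate, ih]

theorem count_zero_rigid (e₀ : ℕ) (es : List ℕ) :
    (rigid e₀ es).count 0 = e₀ + es.sum := by
  unfold rigid
  rw [List.count_append, count_zero_blocks]
  simp [List.count_replicate, show (Prod.snd ∘ Prod.swap : ℕ × ℕ → ℕ) = Prod.fst from rfl,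
    List.zipIdx_map_fst]

theorem count_pos_blocks (es : List ℕ) (c : ℕ) (hc : c ≠ 0) : ∀ k : ℕ,
    ((((es.zipIdx k).map Prod.swap).map (fun p => (p.1 + 1) :: List.replicate p.2 0)).flatten).count c ≤ 1
    ∧ (c ≤ k →
      ((((es.zipIdx k).map Prod.swap).map (fun p => (p.1 + 1) :: List.replicate p.2 0)).flatten).count c
        = 0) := by
  induction es with
  | nil => simp
  | cons e es ih =>
      intro k
      obtain ⟨h1, h2⟩ := ih (k + 1)
      have hrw : (((((e :: es).zipIdx k).map Prod.swap).map
            (fun p => (p.1 + 1) :: List.replicate p.2 0)).flatten).count c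
          = (if k + 1 = c then 1 else 0)
            + ((((es.zipIdx (k + 1)).map Prod.swap).map
                (fun p => (p.1 + 1) :: List.replicate p.2 0)).flatten).count c := by
        simp [List.zipIdx_cons, List.count_cons, List.count_append, List.count_replicate,
          Ne.symm hc, Nat.add_comm]
      rw [hrw]
      by_cases hk : k + 1 = c
      · rw [h2 (by omega)]
        exact ⟨by simp [hk], fun hle => by omega⟩
      · simp only [if_neg hk, Nat.zero_add]
        exact ⟨h1, fun h => h2 (by omega)⟩

theorem count_pos_rigid (e₀ : ℕ) (es : List ℕ) (c : ℕ) (hc : c ≠ 0) :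
    (rigid e₀ es).count c ≤ 1 := by
  unfold rigid
  rw [List.count_append]
  have h1 := (count_pos_blocks es c hc 0).1
  have hrep : (List.replicate e₀ (0 : ℕ)).count c = 0 := by
    simp [List.count_replicate, Ne.symm hc]
  have : es.zipIdx.map Prod.swap = (es.zipIdx 0).map Prod.swap := rfl
  rw [this]
  omega

theorem eq_zero_of_two_le {e₀ : ℕ} {es : List ℕ} {u : Word} (hu : u <:+: rigid e₀ es)
    {c : ℕ} (h2 : 2 ≤ u.count c) : c = 0 := by
  by_contra hc
  have := (hu.sublist.count_le c).trans (count_pos_rigid e₀ es c hc)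
  omega

theorem rep_of_sq {e₀ : ℕ} {es : List ℕ} {a W : Word} (hW : W <:+: rigid e₀ es)
    (hcnt : ∀ x, 2 * a.count x ≤ W.count x) : a = List.replicate a.length 0 := by
  apply List.eq_replicate_of_mem
  intro x hx
  have h1 : 1 ≤ a.count x := List.count_pos_iff.mpr hx
  exact eq_zero_of_two_le hW (c := x) (by have := hcnt x; omega)

theorem rep_comm (p q : ℕ) :
    List.replicate p (0 : ℕ) ++ List.replicate q 0
      = List.replicate q 0 ++ List.replicate p 0 := by
  rw [← List.replicate_add, ← List.replicate_add, Nat.add_comm]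

theorem rep_swap (p q : ℕ) (X : Word) :
    List.replicate p (0 : ℕ) ++ (List.replicate q 0 ++ X)
      = List.replicate q 0 ++ (List.replicate p 0 ++ X) := by
  rw [← List.append_assoc, rep_comm, List.append_assoc]

theorem id1_eq (e₀ : ℕ) (es : List ℕ) (ψ : ℕ → Word)
    (h : subst ψ [0,1,2,0,3,1] <:+: rigid e₀ es ∨ subst ψ [1,0,2,0,3,1] <:+: rigid e₀ es) :
    subst ψ [0,1,2,0,3,1] = subst ψ [1,0,2,0,3,1] := by
  have hs : ∀ x, 2 * (ψ 0).count x ≤ (subst ψ [0,1,2,0,3,1]).count x ∧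
      2 * (ψ 1).count x ≤ (subst ψ [0,1,2,0,3,1]).count x := by
    intro x
    simp only [subst, List.flatMap_cons, List.flatMap_nil, List.append_nil, List.count_append]
    omega
  have ht : ∀ x, 2 * (ψ 0).count x ≤ (subst ψ [1,0,2,0,3,1]).count x ∧
      2 * (ψ 1).count x ≤ (subst ψ [1,0,2,0,3,1]).count x := by
    intro x
    simp only [subst, List.flatMap_cons, List.flatMap_nil, List.append_nil, List.count_append]
    omega
  have ha : ψ 0 = List.replicate (ψ 0).length 0 := by
    rcases h with h | h
    exacts [rep_of_sq h (fun x => (hs x).1), rep_of_sq h (fun x => (ht x).1)]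
  have hb : ψ 1 = List.replicate (ψ 1).length 0 := by
    rcases h with h | h
    exacts [rep_of_sq h (fun x => (hs x).2), rep_of_sq h (fun x => (ht x).2)]
  simp only [subst, List.flatMap_cons, List.flatMap_nil, List.append_nil]
  rw [ha, hb, rep_swap]

theorem id2_eq (e₀ : ℕ) (es : List ℕ) (ψ : ℕ → Word)
    (h : subst ψ [0,2,0,1,3,1] <:+: rigid e₀ es ∨ subst ψ [0,2,1,0,3,1] <:+: rigid e₀ es) :
    subst ψ [0,2,0,1,3,1] = subst ψ [0,2,1,0,3,1] := by
  have hs : ∀ x, 2 * (ψ 0).count x ≤ (subst ψ [0,2,0,1,3,1]).count x ∧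
      2 * (ψ 1).count x ≤ (subst ψ [0,2,0,1,3,1]).count x := by
    intro x
    simp only [subst, List.flatMap_cons, List.flatMap_nil, List.append_nil, List.count_append]
    omega
  have ht : ∀ x, 2 * (ψ 0).count x ≤ (subst ψ [0,2,1,0,3,1]).count x ∧
      2 * (ψ 1).count x ≤ (subst ψ [0,2,1,0,3,1]).count x := by
    intro x
    simp only [subst, List.flatMap_cons, List.flatMap_nil, List.append_nil, List.count_append]
    omega
  have ha : ψ 0 = List.replicate (ψ 0).length 0 := by
    rcases h with h | h
    exacts [rep_of_sq h (fun x => (hs x).1), rep_of_sq h (fun x => (ht x).1)]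
  have hb : ψ 1 = List.replicate (ψ 1).length 0 := by
    rcases h with h | h
    exacts [rep_of_sq h (fun x => (hs x).2), rep_of_sq h (fun x => (ht x).2)]
  simp only [subst, List.flatMap_cons, List.flatMap_nil, List.append_nil]
  rw [ha, hb, rep_swap]

theorem id3_eq (e₀ : ℕ) (es : List ℕ) (ψ : ℕ → Word)
    (h : subst ψ [0,2,1,3,0,1] <:+: rigid e₀ es ∨ subst ψ [0,2,1,3,1,0] <:+: rigid e₀ es) :
    subst ψ [0,2,1,3,0,1] = subst ψ [0,2,1,3,1,0] := by
  have hs : ∀ x, 2 * (ψ 0).count x ≤ (subst ψ [0,2,1,3,0,1]).count x ∧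
      2 * (ψ 1).count x ≤ (subst ψ [0,2,1,3,0,1]).count x := by
    intro x
    simp only [subst, List.flatMap_cons, List.flatMap_nil, List.append_nil, List.count_append]
    omega
  have ht : ∀ x, 2 * (ψ 0).count x ≤ (subst ψ [0,2,1,3,1,0]).count x ∧
      2 * (ψ 1).count x ≤ (subst ψ [0,2,1,3,1,0]).count x := by
    intro x
    simp only [subst, List.flatMap_cons, List.flatMap_nil, List.append_nil, List.count_append]
    omega
  have ha : ψ 0 = List.replicate (ψ 0).length 0 := by
    rcases h with h | h
    exacts [rep_of_sq h (fun x => (hs x).1), rep_of_sq h (fun x => (ht x).1)]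
  have hb : ψ 1 = List.replicate (ψ 1).length 0 := by
    rcases h with h | h
    exacts [rep_of_sq h (fun x => (hs x).2), rep_of_sq h (fun x => (ht x).2)]
  simp only [subst, List.flatMap_cons, List.flatMap_nil, List.append_nil]
  rw [ha, hb, rep_comm]

theorem count_subst_rep (ψ : ℕ → Word) (x m : ℕ) :
    (subst ψ (List.replicate m 0)).count x = m * (ψ 0).count x := by
  induction m with
  | zero => simp [subst]
  | succ m ih =>
      have : subst ψ (List.replicate (m + 1) 0) = ψ 0 ++ subst ψ (List.replicate m 0) := by
        simp [subst, List.replicate_succ]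
      rw [this, List.count_append, ih, Nat.succ_mul]
      ring

theorem subst_rep_nil (ψ : ℕ → Word) (h : ψ 0 = []) (m : ℕ) :
    subst ψ (List.replicate m 0) = [] := by
  induction m with
  | zero => rfl
  | succ m ih =>
      have h2 : subst ψ (List.replicate (m + 1) 0) = ψ 0 ++ subst ψ (List.replicate m 0) := by
        simp [subst, List.replicate_succ]
      rw [h2, h, List.nil_append, ih]

theorem count_subst_tblocks (ψ : ℕ → Word) (x : ℕ) (l : List ℕ) :
    l.length * (ψ 0).count x
      ≤ (subst ψ ((l.map (fun i => [i + 1, 0])).flatten)).count x := by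
  induction l with
  | nil => simp [subst]
  | cons a l ih =>
      have hrw : subst ψ (((a :: l).map (fun i => [i + 1, 0])).flatten)
          = ψ (a + 1) ++ (ψ 0 ++ subst ψ ((l.map (fun i => [i + 1, 0])).flatten)) := by
        simp [subst]
      rw [hrw, List.count_append, List.count_append, List.length_cons, Nat.succ_mul]
      omega

theorem psi0_nil_eq (ψ : ℕ → Word) (h : ψ 0 = []) (l : List ℕ) :
    subst ψ (l.map (· + 1)) = subst ψ ((l.map (fun i => [i + 1, 0])).flatten) := by
  induction l with
  | nil => rfl
  | cons a l ih =>
      have h1 : subst ψ ((a :: l).map (· + 1)) = ψ (a + 1) ++ subst ψ (l.map (· + 1)) := by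
        simp [subst]
      have h2 : subst ψ (((a :: l).map (fun i => [i + 1, 0])).flatten)
          = ψ (a + 1) ++ (ψ 0 ++ subst ψ ((l.map (fun i => [i + 1, 0])).flatten)) := by
        simp [subst]
      rw [h1, h2, h, List.nil_append, ih]

theorem idA_eq (n e₀ : ℕ) (es : List ℕ) (hn : 3 ≤ n) (hlim : e₀ + es.sum ≤ n - 1)
    (ψ : ℕ → Word)
    (h : subst ψ (idA n).1 <:+: rigid e₀ es ∨ subst ψ (idA n).2 <:+: rigid e₀ es) :
    subst ψ (idA n).1 = subst ψ (idA n).2 := by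
  have hz : ψ 0 = [] := by
    rw [List.eq_nil_iff_forall_not_mem]
    intro x hx
    have h1 : 1 ≤ (ψ 0).count x := List.count_pos_iff.mpr hx
    have hn1 : n ≤ n * (ψ 0).count x := Nat.le_mul_of_pos_right n (by omega)
    have hbig : ∀ W, W <:+: rigid e₀ es → n * (ψ 0).count x ≤ W.count x → False := by
      intro W hW hc
      have hle := hW.sublist.count_le x
      by_cases hx0 : x = 0
      · subst hx0
        rw [count_zero_rigid] at hle
        omega
      · have := count_pos_rigid e₀ es x hx0
        omega
    rcases h with h | h
    · apply hbig _ h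
      have hrw : subst ψ (idA n).1
          = subst ψ (List.replicate n 0) ++ subst ψ ((List.range n).map (· + 1)) := by
        simp [idA, subst]
      rw [hrw, List.count_append, count_subst_rep]
      omega
    · apply hbig _ h
      have := count_subst_tblocks ψ x (List.range n)
      simp only [List.length_range] at this
      simpa [idA] using this
  have h1 : subst ψ (idA n).1 = subst ψ ((List.range n).map (· + 1)) := by
    have : subst ψ (idA n).1
        = subst ψ (List.replicate n 0) ++ subst ψ ((List.range n).map (· + 1)) := by
      simp [idA, subst]
    rw [this, subst_rep_nil ψ hz]
    simp
  rw [h1, psi0_nil_eq ψ hz]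
  rfl

end Stmt3Aux

/-- For every `n ≥ 3`, the factor monoid of any `(n-1)`-limited rigid word
satisfies the identities (0) and (Aₙ). -/
theorem stmt3 (n : ℕ) (hn : 3 ≤ n) (e₀ : ℕ) (es : List ℕ)
    (hlim : e₀ + es.sum ≤ n - 1) :
    (∀ p ∈ ids0, SatId (FM (rigid e₀ es)) p) ∧ SatId (FM (rigid e₀ es)) (idA n) := by
  constructor
  · intro p hp
    simp only [ids0, Set.mem_insert_iff, Set.mem_singleton_iff] at hp
    rcases hp with rfl | rfl | rfl
    · exact satId_of _ (fun ψ h => id1_eq e₀ es ψ (Or.inl h))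
        (fun ψ h => id1_eq e₀ es ψ (Or.inr h))
    · exact satId_of _ (fun ψ h => id2_eq e₀ es ψ (Or.inl h))
        (fun ψ h => id2_eq e₀ es ψ (Or.inr h))
    · exact satId_of _ (fun ψ h => id3_eq e₀ es ψ (Or.inl h))
        (fun ψ h => id3_eq e₀ es ψ (Or.inr h))
  · exact satId_of _ (fun ψ h => idA_eq n e₀ es hn hlim ψ (Or.inl h))
      (fun ψ h => idA_eq n e₀ es hn hlim ψ (Or.inr h))
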